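/- For any cwf C, define Pr^∧(Γ) to be the set of finite sequences ⟨A1,...,An⟩ of types in Ty(Γ), ordered by ⟨A1,...,An⟩ ≤ ⟨B1,...,Bm⟩ iff for each k, Tm(Γ.A1.A2{p}.....An{p^{(n−1)}}, B_k{p^{(n)}}) is inhabited; with top element the empty sequence and meet given by concatenation. Then Pr^∧(Γ) is a meet-semilattice (a preorder with greatest element and binary infima), the substitution ⟨A1,...,An⟩{f} = ⟨A1{f},...,An{f}⟩ is a monotone semilattice morphism, and Pr^∧ is functorial in Γ, making (C, Pr^∧) a cwf with Horn doctrine. -/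

import Mathlib

/-- A category with families (cwf). -/
structure CwF where
  Ob : Type
  Hom : Ob → Ob → Type
  id : (Γ : Ob) → Hom Γ Γ
  comp : {Γ Δ Θ : Ob} → Hom Δ Θ → Hom Γ Δ → Hom Γ Θ
  id_comp : ∀ {Γ Δ} (f : Hom Γ Δ), comp (id Δ) f = f
  comp_id : ∀ {Γ Δ} (f : Hom Γ Δ), comp f (id Γ) = f
  assoc : ∀ {Γ Δ Θ Ξ} (h : Hom Θ Ξ) (g : Hom Δ Θ) (f : Hom Γ Δ),
    comp (comp h g) f = comp h (comp g f)
  unit : Ob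
  eps : (Γ : Ob) → Hom Γ unit
  eps_unique : ∀ {Γ} (f : Hom Γ unit), f = eps Γ
  Ty : Ob → Type
  tySub : {Γ Δ : Ob} → Ty Γ → Hom Δ Γ → Ty Δ
  tySub_id : ∀ {Γ} (A : Ty Γ), tySub A (id Γ) = A
  tySub_comp : ∀ {Γ Δ Θ} (A : Ty Γ) (f : Hom Δ Γ) (g : Hom Θ Δ),
    tySub A (comp f g) = tySub (tySub A f) g
  Tm : (Γ : Ob) → Ty Γ → Type
  tmSub : {Γ Δ : Ob} → {A : Ty Γ} → Tm Γ A → (f : Hom Δ Γ) → Tm Δ (tySub A f)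
  tmSub_id : ∀ {Γ} {A : Ty Γ} (a : Tm Γ A), HEq (tmSub a (id Γ)) a
  tmSub_comp : ∀ {Γ Δ Θ} {A : Ty Γ} (a : Tm Γ A) (f : Hom Δ Γ) (g : Hom Θ Δ),
    HEq (tmSub a (comp f g)) (tmSub (tmSub a f) g)
  ext : (Γ : Ob) → Ty Γ → Ob
  p : {Γ : Ob} → (A : Ty Γ) → Hom (ext Γ A) Γ
  v : {Γ : Ob} → (A : Ty Γ) → Tm (ext Γ A) (tySub A (p A))
  pair : {Γ Δ : Ob} → (A : Ty Γ) → (f : Hom Δ Γ) → Tm Δ (tySub A f) → Hom Δ (ext Γ A)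
  p_pair : ∀ {Γ Δ} (A : Ty Γ) (f : Hom Δ Γ) (a : Tm Δ (tySub A f)),
    comp (p A) (pair A f a) = f
  v_pair : ∀ {Γ Δ} (A : Ty Γ) (f : Hom Δ Γ) (a : Tm Δ (tySub A f)),
    HEq (tmSub (v A) (pair A f a)) a
  pair_eta : ∀ {Γ Δ} (A : Ty Γ) (h : Hom Δ (ext Γ A)) (a : Tm Δ (tySub A (comp (p A) h))),
    HEq a (tmSub (v A) h) → pair A (comp (p A) h) a = h
  pair_comp : ∀ {Γ Δ Θ} (A : Ty Γ) (f : Hom Δ Γ) (a : Tm Δ (tySub A f)) (g : Hom Θ Δ)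
    (a' : Tm Θ (tySub A (comp f g))), HEq a' (tmSub a g) →
    comp (pair A f a) g = pair A (comp f g) a'

namespace CwF

/-- The section ⟨1, M⟩ : Γ → Γ.A determined by a term M. -/
def sec (C : CwF) {Γ : C.Ob} {A : C.Ty Γ} (M : C.Tm Γ A) : C.Hom Γ (C.ext Γ A) :=
  C.pair A (C.id Γ) (cast (congrArg (C.Tm Γ) (C.tySub_id A).symm) M)

/-- The canonical morphism q(f,S) = f.S : Δ.S{f} → Γ.S. -/
def q (C : CwF) {Γ Δ : C.Ob} (f : C.Hom Δ Γ) (S : C.Ty Γ) :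
    C.Hom (C.ext Δ (C.tySub S f)) (C.ext Γ S) :=
  C.pair S (C.comp f (C.p (C.tySub S f)))
    (cast (congrArg (C.Tm _) (C.tySub_comp S f (C.p (C.tySub S f))).symm)
      (C.v (C.tySub S f)))

/-- The propositions-as-types preorder on types: A ≤ B iff Tm(Γ.A, B{p(A)}) is inhabited. -/
def le (C : CwF) {Γ : C.Ob} (A B : C.Ty Γ) : Prop :=
  Nonempty (C.Tm (C.ext Γ A) (C.tySub B (C.p A)))

end CwF

namespace CwF

/-- Iterated context extension by a list of types over Γ, together with the
iterated projection back to Γ: Γ.A₁.A₂{p}.….Aₙ{p^{(n−1)}}. -/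
def extGo (C : CwF) {Γ : C.Ob} : (X : C.Ob) → C.Hom X Γ → List (C.Ty Γ) → (Y : C.Ob) × C.Hom Y Γ
  | X, g, [] => ⟨X, g⟩
  | X, g, A :: L => C.extGo (C.ext X (C.tySub A g)) (C.comp g (C.p (C.tySub A g))) L

/-- The object Γ.A₁.A₂{p}.….Aₙ{p^{(n−1)}}. -/
def extList (C : CwF) {Γ : C.Ob} (L : List (C.Ty Γ)) : C.Ob :=
  (C.extGo Γ (C.id Γ) L).1

/-- The iterated projection p^{(n)} : Γ.A₁.….Aₙ{p^{(n−1)}} → Γ. -/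
def pList (C : CwF) {Γ : C.Ob} (L : List (C.Ty Γ)) : C.Hom (C.extList L) Γ :=
  (C.extGo Γ (C.id Γ) L).2

/-- The Horn-doctrine order on finite sequences of types:
⟨A₁,…,Aₙ⟩ ≤ ⟨B₁,…,Bₘ⟩ iff each Tm(Γ.A₁.….Aₙ{p^{(n−1)}}, B_k{p^{(n)}}) is inhabited. -/
def leL (C : CwF) {Γ : C.Ob} (L M : List (C.Ty Γ)) : Prop :=
  ∀ B ∈ M, Nonempty (C.Tm (C.extList L) (C.tySub B (C.pList L)))

namespace HornAux

/-- Weakening: a projection from the iterated extension back to the base. -/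
lemma extGo_weaken (C : CwF) {Γ : C.Ob} (L : List (C.Ty Γ)) :
    ∀ (X : C.Ob) (g : C.Hom X Γ),
      ∃ w : C.Hom (C.extGo X g L).1 X, C.comp g w = (C.extGo X g L).2 := by
  induction L with
  | nil => intro X g; exact ⟨C.id X, C.comp_id g⟩
  | cons A L ih =>
    intro X g
    obtain ⟨w, hw⟩ := ih (C.ext X (C.tySub A g)) (C.comp g (C.p (C.tySub A g)))
    exact ⟨C.comp (C.p (C.tySub A g)) w, by exact (C.assoc g (C.p (C.tySub A g)) w).symm.trans hw⟩

/-- Lifting a term over the base along the iterated extension. -/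
lemma extGo_lift (C : CwF) {Γ : C.Ob} (L : List (C.Ty Γ)) (X : C.Ob) (g : C.Hom X Γ)
    (A : C.Ty Γ) (t : C.Tm X (C.tySub A g)) :
    Nonempty (C.Tm (C.extGo X g L).1 (C.tySub A (C.extGo X g L).2)) := by
  obtain ⟨w, hw⟩ := extGo_weaken C L X g
  exact ⟨cast (by rw [← C.tySub_comp, hw]) (C.tmSub t w)⟩

/-- Every type in the list has a term over the iterated extension. -/
lemma extGo_mem (C : CwF) {Γ : C.Ob} (L : List (C.Ty Γ)) :
    ∀ (X : C.Ob) (g : C.Hom X Γ), ∀ A ∈ L,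
      Nonempty (C.Tm (C.extGo X g L).1 (C.tySub A (C.extGo X g L).2)) := by
  induction L with
  | nil => intro X g A hA; simp at hA
  | cons B L ih =>
    intro X g A hA
    rcases List.mem_cons.mp hA with rfl | hA
    · exact extGo_lift C L _ _ A (cast (by rw [← C.tySub_comp]) (C.v (C.tySub A g)))
    · exact ih _ _ A hA

/-- Pairing: terms of all the types in M give a morphism into the iterated extension
commuting with the projections. -/
lemma extGo_pair (C : CwF) {Γ : C.Ob} (M : List (C.Ty Γ)) :
    ∀ (Y : C.Ob) (h0 : C.Hom Y Γ) (X : C.Ob) (g : C.Hom X Γ) (k : C.Hom X Y),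
      C.comp h0 k = g → (∀ B ∈ M, Nonempty (C.Tm X (C.tySub B g))) →
      ∃ h : C.Hom X (C.extGo Y h0 M).1, C.comp (C.extGo Y h0 M).2 h = g := by
  induction M with
  | nil => intro Y h0 X g k hk _; exact ⟨k, hk⟩
  | cons B M ih =>
    intro Y h0 X g k hk ht
    obtain ⟨t⟩ := ht B List.mem_cons_self
    refine ih (C.ext Y (C.tySub B h0)) (C.comp h0 (C.p _)) X g
      (C.pair (C.tySub B h0) k (cast (by rw [← C.tySub_comp, hk]) t)) ?_
      (fun B' hB' => ht B' (List.mem_cons_of_mem _ hB'))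
    rw [C.assoc, C.p_pair]
    exact hk

/-- Substitution: the canonical morphism from the extension of the substituted list
to the extension of the original list. -/
lemma extGo_sub (C : CwF) {Γ Δ : C.Ob} (f : C.Hom Δ Γ) (L : List (C.Ty Γ)) :
    ∀ (X : C.Ob) (g : C.Hom X Γ) (X' : C.Ob) (g' : C.Hom X' Δ) (k : C.Hom X' X),
      C.comp g k = C.comp f g' →
      ∃ h : C.Hom (C.extGo X' g' (L.map (fun A => C.tySub A f))).1 (C.extGo X g L).1,
        C.comp (C.extGo X g L).2 h
          = C.comp f (C.extGo X' g' (L.map (fun A => C.tySub A f))).2 := by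
  induction L with
  | nil => intro X g X' g' k hk; exact ⟨k, hk⟩
  | cons A L ih =>
    intro X g X' g' k hk
    refine ih (C.ext X (C.tySub A g)) (C.comp g (C.p _))
      (C.ext X' (C.tySub (C.tySub A f) g')) (C.comp g' (C.p _))
      (C.pair (C.tySub A g) (C.comp k (C.p _))
        (cast (by simp only [← C.tySub_comp, ← C.assoc, hk])
          (C.v (C.tySub (C.tySub A f) g')))) ?_
    rw [C.assoc, C.p_pair]
    simp only [← C.assoc, hk]

end HornAux

end CwF

/-- For any cwf C, the finite sequences of types in Ty(Γ) with the order above form a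
meet-semilattice preorder with top the empty sequence and meet given by concatenation;
componentwise substitution is a monotone semilattice morphism, functorially in Γ.
Hence (C, Pr^∧) is a cwf with Horn doctrine. -/
theorem horn_doctrine (C : CwF) :
    (∀ (Γ : C.Ob) (L : List (C.Ty Γ)), C.leL L L) ∧
    (∀ (Γ : C.Ob) (L M N : List (C.Ty Γ)), C.leL L M → C.leL M N → C.leL L N) ∧
    (∀ (Γ : C.Ob) (L : List (C.Ty Γ)), C.leL L []) ∧
    (∀ (Γ : C.Ob) (P L M : List (C.Ty Γ)), C.leL P (L ++ M) ↔ C.leL P L ∧ C.leL P M) ∧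
    (∀ (Γ : C.Ob) (L M : List (C.Ty Γ)), C.leL (L ++ M) L ∧ C.leL (L ++ M) M) ∧
    (∀ {Γ Δ : C.Ob} (f : C.Hom Δ Γ) (L M : List (C.Ty Γ)),
      C.leL L M → C.leL (L.map (fun A => C.tySub A f)) (M.map (fun A => C.tySub A f))) ∧
    (∀ {Γ Δ : C.Ob} (f : C.Hom Δ Γ) (L M : List (C.Ty Γ)),
      (L ++ M).map (fun A => C.tySub A f)
        = L.map (fun A => C.tySub A f) ++ M.map (fun A => C.tySub A f)) ∧
    (∀ (Γ : C.Ob) (L : List (C.Ty Γ)), L.map (fun A => C.tySub A (C.id Γ)) = L) ∧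
    (∀ {Γ Δ Θ : C.Ob} (f : C.Hom Δ Γ) (g : C.Hom Θ Δ) (L : List (C.Ty Γ)),
      L.map (fun A => C.tySub A (C.comp f g))
        = (L.map (fun A => C.tySub A f)).map (fun A => C.tySub A g)) := by
  open CwF.HornAux in
  refine ⟨?_, ?_, ?_, ?_, ?_, ?_, ?_, ?_, ?_⟩
  · -- reflexivity
    intro Γ L B hB
    exact extGo_mem C L Γ (C.id Γ) B hB
  · -- transitivity
    intro Γ L M N hLM hMN B hB
    obtain ⟨h, hh⟩ := extGo_pair C M Γ (C.id Γ) (C.extList L) (C.pList L) (C.pList L)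
      (C.id_comp _) hLM
    obtain ⟨t⟩ := hMN B hB
    exact ⟨cast (by exact (congrArg (C.Tm (C.extList L)) (C.tySub_comp B (C.pList M) h)).symm.trans (congrArg (C.Tm (C.extList L)) (congrArg (C.tySub B) hh))) (C.tmSub t h)⟩
  · -- top
    intro Γ L B hB
    simp at hB
  · -- meet is glb
    intro Γ P L M
    constructor
    · intro h
      exact ⟨fun B hB => h B (List.mem_append_left _ hB),
        fun B hB => h B (List.mem_append_right _ hB)⟩
    · rintro ⟨h1, h2⟩ B hB
      rcases List.mem_append.mp hB with hB | hB
      · exact h1 B hB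
      · exact h2 B hB
  · -- meet is a lower bound
    intro Γ L M
    exact ⟨fun B hB => extGo_mem C (L ++ M) Γ (C.id Γ) B (List.mem_append_left _ hB),
      fun B hB => extGo_mem C (L ++ M) Γ (C.id Γ) B (List.mem_append_right _ hB)⟩
  · -- substitution is monotone
    intro Γ Δ f L M hLM B' hB'
    obtain ⟨B, hB, rfl⟩ := List.mem_map.mp hB'
    obtain ⟨h, hh⟩ := extGo_sub C f L Γ (C.id Γ) Δ (C.id Δ) f
      (by rw [C.id_comp, C.comp_id])
    obtain ⟨t⟩ := hLM B hB
    exact ⟨cast (by simp only [CwF.pList, CwF.extList]; rw [← C.tySub_comp, hh, C.tySub_comp]) (C.tmSub t h)⟩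
  · -- substitution preserves meets
    intro Γ Δ f L M
    exact List.map_append
  · -- identity substitution
    intro Γ L
    simp [C.tySub_id]
  · -- composition of substitutions
    intro Γ Δ Θ f g L
    simp [List.map_map, Function.comp, C.tySub_comp]
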